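/- Let σ: ℝ → ℝ be linear on (a−δ, a+δ): σ(t) = α(t−a) + β for t ∈ (a−δ, a+δ), with α ≠ 0. Consider a fully-connected network with H hidden layers, each hidden width d_h > d₀, input X ∈ ℝ^{d₀×N}, output Y ∈ ℝ^{d_{H+1}×N}, and quadratic loss E. Assume rank([Xᵀ, 1_N, Yᵀ]) > rank([Xᵀ, 1_N]). Then E has a local minimum Θ with E(Θ) > 0. -/

import Mathlib

open Matrix
/-- Outputs of the hidden layers of a fully connected network:
`hiddenOut σ d N X W b h` is the output matrix of the h-th layer (layer 0 is
the input X). -/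
noncomputable def hiddenOut (σ : ℝ → ℝ) (d : ℕ → ℕ) (N : ℕ)
    (X : Matrix (Fin (d 0)) (Fin N) ℝ)
    (W : (h : ℕ) → Matrix (Fin (d (h + 1))) (Fin (d h)) ℝ)
    (b : (h : ℕ) → Fin (d (h + 1)) → ℝ) :
    (h : ℕ) → Matrix (Fin (d h)) (Fin N) ℝ
  | 0 => X
  | h + 1 => Matrix.of fun i n =>
      σ ((∑ j, W h i j * hiddenOut σ d N X W b h j n) + b h i)

/-- Linearized network output: the activation replaced by its affine formula. -/
noncomputable def linOut (a α β : ℝ) (d : ℕ → ℕ) (N : ℕ)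
    (X : Matrix (Fin (d 0)) (Fin N) ℝ)
    (W : (h : ℕ) → Matrix (Fin (d (h + 1))) (Fin (d h)) ℝ)
    (b : (h : ℕ) → Fin (d (h + 1)) → ℝ) :
    (h : ℕ) → Matrix (Fin (d h)) (Fin N) ℝ
  | 0 => X
  | h + 1 => Matrix.of fun i n =>
      α * (((∑ j, W h i j * linOut a α β d N X W b h j n) + b h i) - a) + β

lemma hiddenOut_eq_linOut (σ : ℝ → ℝ) (a δ α β : ℝ)
    (hσ : ∀ t ∈ Set.Ioo (a - δ) (a + δ), σ t = α * (t - a) + β)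
    (d : ℕ → ℕ) (N : ℕ) (X : Matrix (Fin (d 0)) (Fin N) ℝ)
    (W : (h : ℕ) → Matrix (Fin (d (h + 1))) (Fin (d h)) ℝ)
    (b : (h : ℕ) → Fin (d (h + 1)) → ℝ) (h : ℕ)
    (hreg : ∀ h' < h, ∀ i n,
      ((∑ j, W h' i j * linOut a α β d N X W b h' j n) + b h' i) ∈
        Set.Ioo (a - δ) (a + δ)) :
    hiddenOut σ d N X W b h = linOut a α β d N X W b h := by
  induction h with
  | zero => rfl
  | succ h ih =>
    have ih' := ih (fun h' hh' => hreg h' (Nat.lt_succ_of_lt hh'))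
    funext i n
    show σ _ = _
    rw [ih']
    exact hσ _ (hreg h (Nat.lt_succ_self h) i n)

lemma continuous_linOut (a α β : ℝ) (d : ℕ → ℕ) (N : ℕ)
    (X : Matrix (Fin (d 0)) (Fin N) ℝ) (h : ℕ) :
    ∀ (i : Fin (d h)) (n : Fin N),
      Continuous fun p : ((h : ℕ) → Matrix (Fin (d (h + 1))) (Fin (d h)) ℝ) ×
          ((h : ℕ) → Fin (d (h + 1)) → ℝ) =>
        linOut a α β d N X p.1 p.2 h i n := by
  induction h with
  | zero => exact fun i n => continuous_const
  | succ h ih =>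
    intro i n
    simp only [linOut, Matrix.of_apply]
    refine (Continuous.add (Continuous.mul continuous_const (Continuous.sub
      (Continuous.add (continuous_finset_sum _ fun j _ => Continuous.mul ?_ (ih j n)) ?_)
      continuous_const)) continuous_const)
    · exact ((continuous_apply (j : Fin (d h))).comp
        (((continuous_apply (i : Fin (d (h+1)))).comp
          ((continuous_apply h).comp continuous_fst))))
    · exact ((continuous_apply (i : Fin (d (h+1)))).comp
        ((continuous_apply h).comp continuous_snd))

lemma linOut_affine (a α β : ℝ) (d : ℕ → ℕ) (N : ℕ)
    (X : Matrix (Fin (d 0)) (Fin N) ℝ)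
    (W : (h : ℕ) → Matrix (Fin (d (h + 1))) (Fin (d h)) ℝ)
    (b : (h : ℕ) → Fin (d (h + 1)) → ℝ) (h : ℕ) :
    ∃ (M : Matrix (Fin (d h)) (Fin (d 0)) ℝ) (m : Fin (d h) → ℝ),
      ∀ i n, linOut a α β d N X W b h i n = (∑ l, M i l * X l n) + m i := by
  induction h with
  | zero =>
    refine ⟨1, 0, fun i n => ?_⟩
    simp [linOut, Matrix.one_apply, Finset.sum_ite_eq]
  | succ h ih =>
    obtain ⟨M, m, hM⟩ := ih
    refine ⟨Matrix.of fun i l => α * ∑ j, W h i j * M j l,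
      fun i => α * ((∑ j, W h i j * m j) + b h i - a) + β, fun i n => ?_⟩
    simp only [linOut, Matrix.of_apply]
    have key : ∑ j, W h i j * linOut a α β d N X W b h j n
        = (∑ l, (∑ j, W h i j * M j l) * X l n) + ∑ j, W h i j * m j := by
      simp only [hM, mul_add, Finset.sum_add_distrib, Finset.mul_sum]
      rw [Finset.sum_comm]
      simp [Finset.sum_mul, mul_assoc]
    rw [key]
    simp only [mul_assoc, ← Finset.mul_sum]
    ring

lemma sum_split {m₀ d0 : ℕ} (hlt : d0 < m₀) (F : Fin d0 → ℝ) (C : ℝ) :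
    ∑ j : Fin m₀, (if hj : (j : ℕ) < d0 then F ⟨j, hj⟩
      else if (j : ℕ) = d0 then C else 0) = (∑ i, F i) + C := by
  set f : ℕ → ℝ := fun j => if hj : j < d0 then F ⟨j, hj⟩
      else if j = d0 then C else 0 with hf
  have h1 : ∑ j : Fin m₀, (if hj : (j : ℕ) < d0 then F ⟨j, hj⟩
      else if (j : ℕ) = d0 then C else 0) = ∑ j ∈ Finset.range m₀, f j :=
    Fin.sum_univ_eq_sum_range f m₀
  rw [h1]
  have h2 : ∑ j ∈ Finset.range m₀, f j = ∑ j ∈ Finset.range (d0 + 1), f j := by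
    refine (Finset.sum_subset (Finset.range_subset_range.2 hlt) fun x _ hx => ?_).symm
    simp only [Finset.mem_range, not_lt] at hx
    simp only [hf]
    rw [dif_neg (by omega), if_neg (by omega)]
  rw [h2, Finset.sum_range_succ]
  congr 1
  · rw [← Fin.sum_univ_eq_sum_range f d0]
    refine Finset.sum_congr rfl fun i _ => ?_
    simp [hf, i.isLt]
  · simp [hf]
section
/-- Constructed hidden weights. -/
noncomputable def Wmk (d : ℕ → ℕ) (ε α : ℝ) :
    (h : ℕ) → Matrix (Fin (d (h + 1))) (Fin (d h)) ℝ :=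
  fun h => Matrix.of fun i j =>
    if (i : ℕ) < d 0 ∧ (j : ℕ) = (i : ℕ) then (if h = 0 then ε else 1 / α) else 0

/-- Constructed hidden biases. -/
noncomputable def bmk (d : ℕ → ℕ) (a β α s : ℝ) :
    (h : ℕ) → Fin (d (h + 1)) → ℝ :=
  fun h i => if (i : ℕ) < d 0 then (if h = 0 then a else a - β / α) else a + s

lemma sumW {dh dh1 d0 : ℕ} (hd : d0 ≤ dh) (c : ℝ) (T : Fin dh → ℝ) (i : Fin dh1) :
    ∑ j : Fin dh, (if (i : ℕ) < d0 ∧ (j : ℕ) = (i : ℕ) then c else 0) * T j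
      = if hi : (i : ℕ) < d0 then c * T ⟨i, lt_of_lt_of_le hi hd⟩ else 0 := by
  by_cases hi : (i : ℕ) < d0
  · rw [dif_pos hi, Finset.sum_eq_single (⟨(i : ℕ), lt_of_lt_of_le hi hd⟩ : Fin dh)]
    · simp [hi]
    · intro j _ hj
      rw [if_neg, zero_mul]
      rintro ⟨-, hji⟩
      exact hj (Fin.ext hji)
    · simp
  · simp [hi]
end
lemma linOut_mk (a α β ε s : ℝ) (hα : α ≠ 0) (H : ℕ) (d : ℕ → ℕ)
    (hwide : ∀ h, 1 ≤ h → h ≤ H → d 0 < d h) (N : ℕ)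
    (X : Matrix (Fin (d 0)) (Fin N) ℝ) :
    ∀ h, 1 ≤ h → h ≤ H → ∀ (i : Fin (d h)) (n : Fin N),
      linOut a α β d N X (Wmk d ε α) (bmk d a β α s) h i n
        = if hi : (i : ℕ) < d 0 then α * (ε * X ⟨i, hi⟩ n) + β else α * s + β := by
  intro h
  induction h with
  | zero => omega
  | succ h ih =>
    intro _ hle i n
    simp only [linOut, Matrix.of_apply]
    by_cases h0 : h = 0
    · subst h0
      have hs : ∑ j, Wmk d ε α 0 i j * linOut a α β d N X (Wmk d ε α) (bmk d a β α s) 0 j n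
          = if hi : (i : ℕ) < d 0 then ε * X ⟨i, hi⟩ n else 0 := by
        exact sumW le_rfl ε (fun j => X j n) i
      rw [hs]
      by_cases hi : (i : ℕ) < d 0
      · rw [dif_pos hi, dif_pos hi]
        simp only [bmk, if_pos hi, if_pos rfl]
        norm_num
      · rw [dif_neg hi, dif_neg hi]
        simp only [bmk, if_neg hi]
        ring
    · have h1 : 1 ≤ h := Nat.one_le_iff_ne_zero.2 h0
      have hhH : h ≤ H := by omega
      have hd : d 0 ≤ d h := le_of_lt (hwide h h1 hhH)
      have hs : ∑ j, Wmk d ε α h i j * linOut a α β d N X (Wmk d ε α) (bmk d a β α s) h j n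
          = if hi : (i : ℕ) < d 0 then
              (1 / α) * linOut a α β d N X (Wmk d ε α) (bmk d a β α s) h ⟨i, lt_of_lt_of_le hi hd⟩ n
            else 0 := by
        have := sumW (dh1 := d (h+1)) hd (1 / α)
          (fun j => linOut a α β d N X (Wmk d ε α) (bmk d a β α s) h j n) i
        simpa [Wmk, h0] using this
      rw [hs]
      by_cases hi : (i : ℕ) < d 0
      · rw [dif_pos hi, dif_pos hi, ih h1 hhH ⟨i, lt_of_lt_of_le hi hd⟩ n, dif_pos hi]
        simp only [bmk, if_pos hi, if_neg h0]
        field_simp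
        ring
      · rw [dif_neg hi, dif_neg hi]
        simp only [bmk, if_neg hi]
        ring

lemma preact_mk (a α β ε s : ℝ) (hα : α ≠ 0) (H : ℕ) (d : ℕ → ℕ)
    (hwide : ∀ h, 1 ≤ h → h ≤ H → d 0 < d h) (N : ℕ)
    (X : Matrix (Fin (d 0)) (Fin N) ℝ) :
    ∀ h, h < H → ∀ (i : Fin (d (h + 1))) (n : Fin N),
      (∑ j, Wmk d ε α h i j * linOut a α β d N X (Wmk d ε α) (bmk d a β α s) h j n)
          + bmk d a β α s h i
        = if hi : (i : ℕ) < d 0 then ε * X ⟨i, hi⟩ n + a else a + s := by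
  intro h hh i n
  by_cases h0 : h = 0
  · subst h0
    have hs : ∑ j, Wmk d ε α 0 i j * linOut a α β d N X (Wmk d ε α) (bmk d a β α s) 0 j n
        = if hi : (i : ℕ) < d 0 then ε * X ⟨i, hi⟩ n else 0 := by
      have := sumW (dh1 := d 1) le_rfl ε (fun j => X j n) i
      simpa [Wmk, linOut] using this
    rw [hs]
    by_cases hi : (i : ℕ) < d 0
    · simp [bmk, hi]
    · simp [bmk, hi]
  · have h1 : 1 ≤ h := Nat.one_le_iff_ne_zero.2 h0
    have hhH : h ≤ H := le_of_lt hh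
    have hd : d 0 ≤ d h := le_of_lt (hwide h h1 hhH)
    have hs : ∑ j, Wmk d ε α h i j * linOut a α β d N X (Wmk d ε α) (bmk d a β α s) h j n
        = if hi : (i : ℕ) < d 0 then
            (1 / α) * linOut a α β d N X (Wmk d ε α) (bmk d a β α s) h ⟨i, lt_of_lt_of_le hi hd⟩ n
          else 0 := by
      have := sumW (dh1 := d (h+1)) hd (1 / α)
        (fun j => linOut a α β d N X (Wmk d ε α) (bmk d a β α s) h j n) i
      simpa [Wmk, h0] using this
    rw [hs]
    by_cases hi : (i : ℕ) < d 0
    · rw [dif_pos hi, dif_pos hi,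
        linOut_mk a α β ε s hα H d hwide N X h h1 hhH ⟨i, lt_of_lt_of_le hi hd⟩ n, dif_pos hi]
      simp only [bmk, if_pos hi, if_neg h0]
      field_simp
      ring
    · rw [dif_neg hi, dif_neg hi]
      simp only [bmk, if_neg hi]
      ring
noncomputable def phiX {d0 dout N : ℕ} (X : Matrix (Fin d0) (Fin N) ℝ) :
    (Matrix (Fin dout) (Fin d0) ℝ × (Fin dout → ℝ)) →ₗ[ℝ]
      EuclideanSpace ℝ (Fin dout × Fin N) where
  toFun Pp := WithLp.toLp 2 (fun kn : Fin dout × Fin N => (∑ i, Pp.1 kn.1 i * X i kn.2) + Pp.2 kn.1)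
  map_add' x y := by
    ext kn
    simp only [PiLp.toLp_apply, Prod.fst_add, Prod.snd_add, Matrix.add_apply, Pi.add_apply, PiLp.add_apply, add_mul,
      Finset.sum_add_distrib]
    ring
  map_smul' c x := by
    ext kn
    simp only [PiLp.toLp_apply, Prod.smul_fst, Prod.smul_snd, Matrix.smul_apply, Pi.smul_apply, PiLp.smul_apply, smul_eq_mul,
      RingHom.id_apply, Finset.mul_sum, mul_add]
    ring

lemma sum_affine {ι κ : Type*} [Fintype ι] [Fintype κ] (w : ι → ℝ) (M : ι → κ → ℝ)
    (m : ι → ℝ) (x : κ → ℝ) :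
    ∑ j, w j * ((∑ l, M j l * x l) + m j)
      = (∑ l, (∑ j, w j * M j l) * x l) + ∑ j, w j * m j := by
  simp only [mul_add, Finset.sum_add_distrib, Finset.mul_sum]
  rw [Finset.sum_comm]
  simp [Finset.sum_mul, mul_assoc]


/-- For an activation that is affine (slope α ≠ 0) on an interval around a,
every hidden layer wider than the input, and data with
rank([Xᵀ,1,Yᵀ]) > rank([Xᵀ,1]), the quadratic loss has a local minimum with
positive loss value. -/
theorem partially_linear_bad_local_min
    (H N dout : ℕ) (hH : 0 < H) (d : ℕ → ℕ)
    (hwide : ∀ h, 1 ≤ h → h ≤ H → d 0 < d h)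
    (σ : ℝ → ℝ) (a δ α β : ℝ) (hδ : 0 < δ) (hα : α ≠ 0)
    (hσ : ∀ t ∈ Set.Ioo (a - δ) (a + δ), σ t = α * (t - a) + β)
    (X : Matrix (Fin (d 0)) (Fin N) ℝ) (Y : Matrix (Fin dout) (Fin N) ℝ)
    (hrank : (Matrix.of fun (n : Fin N) =>
        (Sum.elim (fun i : Fin (d 0) => X i n) (fun _ : Unit => (1 : ℝ)) :
          Fin (d 0) ⊕ Unit → ℝ)).rank <
      (Matrix.of fun (n : Fin N) =>
        (Sum.elim (Sum.elim (fun i : Fin (d 0) => X i n)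
            (fun _ : Unit => (1 : ℝ))) (fun k : Fin dout => Y k n) :
          (Fin (d 0) ⊕ Unit) ⊕ Fin dout → ℝ)).rank) :
    ∃ Θ : ((h : ℕ) → Matrix (Fin (d (h + 1))) (Fin (d h)) ℝ) ×
        ((h : ℕ) → Fin (d (h + 1)) → ℝ) ×
        Matrix (Fin dout) (Fin (d H)) ℝ,
      IsLocalMin
        (fun Θ' : ((h : ℕ) → Matrix (Fin (d (h + 1))) (Fin (d h)) ℝ) ×
            ((h : ℕ) → Fin (d (h + 1)) → ℝ) ×
            Matrix (Fin dout) (Fin (d H)) ℝ =>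
          ∑ k, ∑ n, (Y k n -
            ∑ j, Θ'.2.2 k j * hiddenOut σ d N X Θ'.1 Θ'.2.1 H j n) ^ 2) Θ ∧
      0 < ∑ k, ∑ n, (Y k n -
        ∑ j, Θ.2.2 k j * hiddenOut σ d N X Θ.1 Θ.2.1 H j n) ^ 2 := by
  classical
  -- a bound on the entries of X
  have hB0 : (0:ℝ) < (∑ i, ∑ n, |X i n|) + 1 := by positivity
  set B : ℝ := (∑ i, ∑ n, |X i n|) + 1 with hBdef
  have hXB : ∀ i n, |X i n| ≤ B := by
    intro i n
    have h1 : |X i n| ≤ ∑ n, |X i n| :=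
      Finset.single_le_sum (f := fun n => |X i n|) (fun _ _ => abs_nonneg _)
        (Finset.mem_univ n)
    have h2 : (∑ n, |X i n|) ≤ ∑ i, ∑ n, |X i n| :=
      Finset.single_le_sum (f := fun i => ∑ n, |X i n|)
        (fun _ _ => Finset.sum_nonneg fun _ _ => abs_nonneg _) (Finset.mem_univ i)
    rw [hBdef]; linarith
  set ε : ℝ := δ / (2 * B) with hεdef
  have hε0 : 0 < ε := div_pos hδ (by linarith)
  have hεB : ε * B = δ / 2 := by
    rw [hεdef]; field_simp
  have hεX : ∀ i n, |ε * X i n| < δ := by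
    intro i n
    rw [abs_mul, abs_of_pos hε0]
    have h2 : ε * |X i n| ≤ ε * B :=
      mul_le_mul_of_nonneg_left (hXB i n) (le_of_lt hε0)
    exact lt_of_le_of_lt (h2.trans hεB.le) (by linarith)
  have hαε : α * ε ≠ 0 := mul_ne_zero hα (ne_of_gt hε0)
  obtain ⟨s, hs0, hsδ, hv0⟩ : ∃ s : ℝ, 0 < s ∧ s < δ ∧ α * s + β ≠ 0 := by
    by_cases hc : α * (δ / 2) + β = 0
    · refine ⟨δ / 3, by linarith, by linarith, fun h => ?_⟩
      have h6 : α * (δ / 6) = 0 := by linarith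
      rcases mul_eq_zero.mp h6 with h | h
      · exact hα h
      · linarith
    · exact ⟨δ / 2, by linarith, by linarith, hc⟩
  -- region condition at the constructed parameters
  have hregΘ : ∀ h' < H, ∀ (i : Fin (d (h' + 1))) (n : Fin N),
      ((∑ j, Wmk d ε α h' i j * linOut a α β d N X (Wmk d ε α) (bmk d a β α s) h' j n)
        + bmk d a β α s h' i) ∈ Set.Ioo (a - δ) (a + δ) := by
    intro h' hh' i n
    rw [preact_mk a α β ε s hα H d hwide N X h' hh' i n]
    split_ifs with hi
    · have := abs_lt.mp (hεX ⟨i, hi⟩ n)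
      exact ⟨by linarith [this.1], by linarith [this.2]⟩
    · exact ⟨by linarith, by linarith⟩
  -- least squares
  set y : EuclideanSpace ℝ (Fin dout × Fin N) :=
    (WithLp.toLp 2 (fun kn : Fin dout × Fin N => Y kn.1 kn.2) : EuclideanSpace ℝ (Fin dout × Fin N)) with hydef
  set K : Submodule ℝ (EuclideanSpace ℝ (Fin dout × Fin N)) :=
    LinearMap.range (phiX (dout := dout) X) with hKdef
  obtain ⟨⟨P, p⟩, hPp⟩ := LinearMap.mem_range.mp (K.orthogonalProjection y).2
  have hmin : ∀ w ∈ K,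
      ‖y - (K.orthogonalProjection y : EuclideanSpace ℝ (Fin dout × Fin N))‖ ≤ ‖y - w‖ := by
    intro w hw
    refine (le_of_eq (Submodule.starProjection_minimal (U := K) y)).trans ?_
    exact ciInf_le ⟨0, by rintro z ⟨x, rfl⟩; exact norm_nonneg _⟩ (⟨w, hw⟩ : K)
  have hnorm : ∀ z : EuclideanSpace ℝ (Fin dout × Fin N), ‖z‖ ^ 2 = ∑ kn, z kn ^ 2 := by
    intro z
    rw [EuclideanSpace.norm_eq, Real.sq_sqrt (by positivity)]
    simp [sq_abs]
  have hkey : ∀ w : EuclideanSpace ℝ (Fin dout × Fin N),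
      (∑ k, ∑ n, (Y k n - w (k, n)) ^ 2) = ‖y - w‖ ^ 2 := by
    intro w
    rw [hnorm, Fintype.sum_prod_type]
    rfl
  -- output weights
  set Wout : Matrix (Fin dout) (Fin (d H)) ℝ := Matrix.of fun k j =>
    if hj : (j : ℕ) < d 0 then P k ⟨j, hj⟩ / (α * ε)
    else if (j : ℕ) = d 0 then (p k - (∑ i, P k i) * β / (α * ε)) / (α * s + β)
    else 0 with hWout
  have hdH : d 0 < d H := hwide H hH le_rfl
  have houtΘ : ∀ (k : Fin dout) (n : Fin N),
      (∑ j, Wout k j * linOut a α β d N X (Wmk d ε α) (bmk d a β α s) H j n)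
        = (∑ i, P k i * X i n) + p k := by
    intro k n
    have hform := linOut_mk a α β ε s hα H d hwide N X H hH le_rfl
    have hterm : ∀ j : Fin (d H),
        Wout k j * linOut a α β d N X (Wmk d ε α) (bmk d a β α s) H j n
        = if hj : (j : ℕ) < d 0 then
            (fun i : Fin (d 0) => (P k i / (α * ε)) * (α * (ε * X i n) + β)) ⟨j, hj⟩
          else if (j : ℕ) = d 0 then
            ((p k - (∑ i, P k i) * β / (α * ε)) / (α * s + β)) * (α * s + β)
          else 0 := by
      intro j
      rw [hform j n]
      by_cases hj : (j : ℕ) < d 0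
      · rw [dif_pos hj, dif_pos hj]
        simp only [hWout, Matrix.of_apply, dif_pos hj]
      · rw [dif_neg hj, dif_neg hj]
        simp only [hWout, Matrix.of_apply, dif_neg hj]
        by_cases hj' : (j : ℕ) = d 0
        · rw [if_pos hj', if_pos hj']
        · rw [if_neg hj', if_neg hj', zero_mul]
    rw [Finset.sum_congr rfl fun j _ => hterm j,
      sum_split hdH (fun i : Fin (d 0) => (P k i / (α * ε)) * (α * (ε * X i n) + β)) _]
    have h1 : ∀ i : Fin (d 0), (P k i / (α * ε)) * (α * (ε * X i n) + β)
        = P k i * X i n + (β / (α * ε)) * P k i := by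
      intro i; field_simp
    rw [Finset.sum_congr rfl fun i _ => h1 i, Finset.sum_add_distrib, ← Finset.mul_sum,
      div_mul_cancel₀ _ hv0]
    ring
  -- the parameter point
  set Θ : ((h : ℕ) → Matrix (Fin (d (h + 1))) (Fin (d h)) ℝ) ×
      ((h : ℕ) → Fin (d (h + 1)) → ℝ) × Matrix (Fin dout) (Fin (d H)) ℝ :=
    (Wmk d ε α, bmk d a β α s, Wout) with hΘdef
  -- loss at Θ
  have hlossΘ : (∑ k, ∑ n, (Y k n -
        ∑ j, Θ.2.2 k j * hiddenOut σ d N X Θ.1 Θ.2.1 H j n) ^ 2)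
      = ‖y - phiX (dout := dout) X (P, p)‖ ^ 2 := by
    rw [show Θ.1 = Wmk d ε α from rfl, show Θ.2.1 = bmk d a β α s from rfl,
      show Θ.2.2 = Wout from rfl,
      hiddenOut_eq_linOut σ a δ α β hσ d N X (Wmk d ε α) (bmk d a β α s) H hregΘ,
      ← hkey (phiX (dout := dout) X (P, p))]
    refine Finset.sum_congr rfl fun k _ => Finset.sum_congr rfl fun n _ => ?_
    rw [houtΘ k n]
    rfl
  -- positivity
  have hYne : y ≠ phiX (dout := dout) X (P, p) := by
    intro hy
    have hY : ∀ k n, Y k n = (∑ i, P k i * X i n) + p k := fun k n => by simpa [hydef, phiX] using congrArg (fun v => v (k, n)) hy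
    set A : Matrix (Fin N) (Fin (d 0) ⊕ Unit) ℝ :=
      Matrix.of fun (n : Fin N) =>
        (Sum.elim (fun i : Fin (d 0) => X i n) (fun _ : Unit => (1 : ℝ)) :
          Fin (d 0) ⊕ Unit → ℝ) with hA
    set Bm : Matrix (Fin N) ((Fin (d 0) ⊕ Unit) ⊕ Fin dout) ℝ :=
      Matrix.of fun (n : Fin N) =>
        (Sum.elim (Sum.elim (fun i : Fin (d 0) => X i n)
            (fun _ : Unit => (1 : ℝ))) (fun k : Fin dout => Y k n) :
          (Fin (d 0) ⊕ Unit) ⊕ Fin dout → ℝ) with hBm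
    refine absurd hrank (not_lt.mpr (le_of_eq ?_))
    rw [Matrix.rank, Matrix.rank, Matrix.range_mulVecLin, Matrix.range_mulVecLin]
    have hspan : Submodule.span ℝ (Set.range Bmᵀ) = Submodule.span ℝ (Set.range Aᵀ) := by
      apply le_antisymm
      · rw [Submodule.span_le]
        rintro _ ⟨c, rfl⟩
        rcases c with c | k
        · exact Submodule.subset_span ⟨c, rfl⟩
        · have hcol : Bmᵀ (Sum.inr k)
              = (∑ i, P k i • (Aᵀ (Sum.inl i))) + p k • (Aᵀ (Sum.inr ())) := by
            funext n
            simp only [hA, hBm, Matrix.transpose_apply, Matrix.of_apply, Sum.elim_inl,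
              Sum.elim_inr, Finset.sum_apply, Pi.add_apply, Pi.smul_apply, smul_eq_mul,
              mul_one]
            exact hY k n
          rw [hcol]
          exact Submodule.add_mem _
            (Submodule.sum_mem _ fun i _ => Submodule.smul_mem _ _
              (Submodule.subset_span ⟨Sum.inl i, rfl⟩))
            (Submodule.smul_mem _ _ (Submodule.subset_span ⟨Sum.inr (), rfl⟩))
      · rw [Submodule.span_le]
        rintro _ ⟨c, rfl⟩
        exact Submodule.subset_span ⟨Sum.inl c, rfl⟩
    rw [show Bm.col = Bmᵀ from rfl, show A.col = Aᵀ from rfl, hspan]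
  -- neighbourhood of Θ on which the network is affine
  have hcontpre : ∀ (h' : ℕ) (i : Fin (d (h' + 1))) (n : Fin N),
      Continuous fun Θ' : ((h : ℕ) → Matrix (Fin (d (h + 1))) (Fin (d h)) ℝ) ×
          ((h : ℕ) → Fin (d (h + 1)) → ℝ) ×
          Matrix (Fin dout) (Fin (d H)) ℝ =>
        (∑ j, Θ'.1 h' i j * linOut a α β d N X Θ'.1 Θ'.2.1 h' j n) + Θ'.2.1 h' i := by
    intro h' i n
    have c2 : Continuous fun Θ' : ((h : ℕ) → Matrix (Fin (d (h + 1))) (Fin (d h)) ℝ) ×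
        ((h : ℕ) → Fin (d (h + 1)) → ℝ) ×
        Matrix (Fin dout) (Fin (d H)) ℝ => (Θ'.1, Θ'.2.1) :=
      continuous_fst.prodMk (continuous_fst.comp continuous_snd)
    refine Continuous.add (continuous_finset_sum _ fun j _ => Continuous.mul ?_
      ((continuous_linOut a α β d N X h' j n).comp c2)) ?_
    · exact (continuous_apply j).comp
        ((continuous_apply i).comp ((continuous_apply h').comp continuous_fst))
    · exact (continuous_apply i).comp
        ((continuous_apply h').comp (continuous_fst.comp continuous_snd))
  set U : Set (((h : ℕ) → Matrix (Fin (d (h + 1))) (Fin (d h)) ℝ) ×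
      ((h : ℕ) → Fin (d (h + 1)) → ℝ) ×
      Matrix (Fin dout) (Fin (d H)) ℝ) :=
    ⋂ (h' : Fin H), ⋂ (i : Fin (d ((h' : ℕ) + 1))), ⋂ (n : Fin N),
      {Θ' | ((∑ j, Θ'.1 (h' : ℕ) i j * linOut a α β d N X Θ'.1 Θ'.2.1 (h' : ℕ) j n)
          + Θ'.2.1 (h' : ℕ) i) ∈ Set.Ioo (a - δ) (a + δ)} with hUdef
  have hUopen : IsOpen U := isOpen_iInter_of_finite fun h' =>
    isOpen_iInter_of_finite fun i => isOpen_iInter_of_finite fun n =>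
      isOpen_Ioo.preimage (hcontpre (h' : ℕ) i n)
  have hUmem : ∀ Θ' : ((h : ℕ) → Matrix (Fin (d (h + 1))) (Fin (d h)) ℝ) ×
      ((h : ℕ) → Fin (d (h + 1)) → ℝ) ×
      Matrix (Fin dout) (Fin (d H)) ℝ,
      Θ' ∈ U ↔ ∀ h' < H, ∀ (i : Fin (d (h' + 1))) (n : Fin N),
        ((∑ j, Θ'.1 h' i j * linOut a α β d N X Θ'.1 Θ'.2.1 h' j n) + Θ'.2.1 h' i)
          ∈ Set.Ioo (a - δ) (a + δ) := by
    intro Θ'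
    simp only [hUdef, Set.mem_iInter, Set.mem_setOf_eq]
    constructor
    · intro h h' hh' i n; exact h ⟨h', hh'⟩ i n
    · intro h h' i n; exact h (h' : ℕ) h'.isLt i n
  have hΘU : Θ ∈ U := (hUmem Θ).2 hregΘ
  refine ⟨Θ, ?_, ?_⟩
  · -- local minimality
    refine Filter.eventually_of_mem (hUopen.mem_nhds hΘU) fun Θ' hΘ' => ?_
    dsimp only
    rw [hlossΘ, hiddenOut_eq_linOut σ a δ α β hσ d N X Θ'.1 Θ'.2.1 H ((hUmem Θ').1 hΘ')]
    obtain ⟨M, m, hM⟩ := linOut_affine a α β d N X Θ'.1 Θ'.2.1 H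
    have hout' : ∀ (k : Fin dout) (n : Fin N),
        (∑ j, Θ'.2.2 k j * linOut a α β d N X Θ'.1 Θ'.2.1 H j n)
          = phiX (dout := dout) X
              (Matrix.of fun k l => ∑ j, Θ'.2.2 k j * M j l,
               fun k => ∑ j, Θ'.2.2 k j * m j) (k, n) := by
      intro k n
      rw [Finset.sum_congr rfl fun j _ => by rw [hM j n]]
      exact sum_affine (fun j => Θ'.2.2 k j) (fun j l => M j l) m (fun l => X l n)
    calc ‖y - phiX (dout := dout) X (P, p)‖ ^ 2
        = ‖y - (K.orthogonalProjection y : EuclideanSpace ℝ (Fin dout × Fin N))‖ ^ 2 := by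
          rw [hPp]
      _ ≤ ‖y - phiX (dout := dout) X
            (Matrix.of fun k l => ∑ j, Θ'.2.2 k j * M j l,
             fun k => ∑ j, Θ'.2.2 k j * m j)‖ ^ 2 :=
          pow_le_pow_left₀ (norm_nonneg _)
            (hmin _ (LinearMap.mem_range.mpr ⟨_, rfl⟩)) 2
      _ = ∑ k, ∑ n, (Y k n - ∑ j, Θ'.2.2 k j * linOut a α β d N X Θ'.1 Θ'.2.1 H j n) ^ 2 := by
          rw [← hkey]
          exact Finset.sum_congr rfl fun k _ => Finset.sum_congr rfl fun n _ => by
            rw [hout' k n]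
  · -- positive loss
    rw [hlossΘ]
    have h0 : 0 < ‖y - phiX (dout := dout) X (P, p)‖ := by
      rw [norm_sub_pos_iff]
      exact hYne
    positivity
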